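/- Let 1 < p < ∞ and let w₁ be a locally p-admissible weight on ℝ. Then w₁^{1/(1−p)} is a locally p/(p−1)-admissible weight on ℝ. -/

import Mathlib

open MeasureTheory Set Filter
open scoped ENNReal NNReal Topology

noncomputable section

/-- A "measure on ℝ" in the sense of the paper: positive and finite on all
nonempty bounded open intervals (balls). -/
def IsMeasureOnR (μ : Measure ℝ) : Prop :=
  ∀ a b : ℝ, a < b → 0 < μ (Ioo a b) ∧ μ (Ioo a b) < ⊤

/-- `g` is an upper gradient of `u` on the interval `J ⊆ ℝ`. -/
def IsUpperGradientOn (g u : ℝ → ℝ) (J : Set ℝ) : Prop :=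
  (∀ x, 0 ≤ g x) ∧ Measurable g ∧
    ∀ a b : ℝ, a ≤ b → Icc a b ⊆ J →
      ENNReal.ofReal |u b - u a| ≤ ∫⁻ t in Icc a b, ENNReal.ofReal (g t)

/-- `μ` is doubling within the set `B₀` with constant `Cd`. -/
def DoublingWithinC (μ : Measure ℝ) (Cd : ℝ≥0∞) (B₀ : Set ℝ) : Prop :=
  ∀ x r : ℝ, 0 < r → Ioo (x - r) (x + r) ⊆ B₀ →
    μ (Ioo (x - 2*r) (x + 2*r)) ≤ Cd * μ (Ioo (x - r) (x + r))

/-- `μ` is doubling within the set `B₀`. -/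
def DoublingWithin (μ : Measure ℝ) (B₀ : Set ℝ) : Prop :=
  ∃ Cd : ℝ≥0∞, 0 < Cd ∧ Cd < ⊤ ∧ DoublingWithinC μ Cd B₀

/-- The left-hand side `⨍_B |u - u_B| dμ` of the Poincaré inequality,
computed in `ℝ≥0∞`. -/
def PoinLHS (μ : Measure ℝ) (u : ℝ → ℝ) (B : Set ℝ) : ℝ≥0∞ :=
  (∫⁻ t in B, ENNReal.ofReal |u t - ⨍ s in B, u s ∂μ| ∂μ) / μ B

/-- The quantity `(⨍_B g^p dμ)^(1/p)` computed in `ℝ≥0∞`. -/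
def PoinRHS (μ : Measure ℝ) (g : ℝ → ℝ≥0∞) (p : ℝ) (B : Set ℝ) : ℝ≥0∞ :=
  ((∫⁻ t in B, g t ^ p ∂μ) / μ B) ^ (1/p)

/-- `μ` supports the `p`-Poincaré inequality within `B₀` with constant `C`
and dilation constant `lam`. -/
def PoincareWithinC (μ : Measure ℝ) (p C lam : ℝ) (B₀ : Set ℝ) : Prop :=
  ∀ x r : ℝ, 0 < r → Ioo (x - r) (x + r) ⊆ B₀ →
    ∀ u g : ℝ → ℝ,
      IntegrableOn u (Ioo (x - lam*r) (x + lam*r)) μ →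
      IsUpperGradientOn g u (Ioo (x - lam*r) (x + lam*r)) →
      PoinLHS μ u (Ioo (x - r) (x + r)) ≤
        ENNReal.ofReal (C * r) *
          PoinRHS μ (fun t => ENNReal.ofReal (g t)) p (Ioo (x - lam*r) (x + lam*r))

/-- `μ` supports the `p`-Poincaré inequality within `B₀`. -/
def PoincareWithin (μ : Measure ℝ) (p : ℝ) (B₀ : Set ℝ) : Prop :=
  ∃ C > (0:ℝ), ∃ lam ≥ (1:ℝ), PoincareWithinC μ p C lam B₀

/-- `μ` is `p`-admissible within `B₀`. -/
def AdmissibleWithin (μ : Measure ℝ) (p : ℝ) (B₀ : Set ℝ) : Prop :=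
  DoublingWithin μ B₀ ∧ PoincareWithin μ p B₀

/-- `μ` is locally `p`-admissible. -/
def LocallyAdmissible (μ : Measure ℝ) (p : ℝ) : Prop :=
  ∀ x : ℝ, ∃ R > (0:ℝ), AdmissibleWithin μ p (Ioo (x - R) (x + R))

/-- The pointwise upper Lipschitz constant
`Lip u(x) = limsup_{y→x, y ∈ s} |u(y)-u(x)|/|y-x|`, computed in `ℝ≥0∞`. -/
def eLipWithin (u : ℝ → ℝ) (s : Set ℝ) (x : ℝ) : ℝ≥0∞ :=
  Filter.limsup (fun y => ENNReal.ofReal (|u y - u x| / |y - x|)) (𝓝[s \ {x}] x)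

/-- `μ` supports the Lipschitz `p`-Poincaré inequality within `B₀` with
constant `C` and dilation constant `lam`. -/
def LipPoincareWithinC (μ : Measure ℝ) (p C lam : ℝ) (B₀ : Set ℝ) : Prop :=
  ∀ x r : ℝ, 0 < r → Ioo (x - r) (x + r) ⊆ B₀ →
    ∀ (u : ℝ → ℝ) (K : ℝ≥0), LipschitzOnWith K u (Ioo (x - lam*r) (x + lam*r)) →
      PoinLHS μ u (Ioo (x - r) (x + r)) ≤
        ENNReal.ofReal (C * r) *
          PoinRHS μ (eLipWithin u (Ioo (x - lam*r) (x + lam*r))) p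
            (Ioo (x - lam*r) (x + lam*r))

/-- `μ` supports the Lipschitz `p`-Poincaré inequality within `B₀`. -/
def LipPoincareWithin (μ : Measure ℝ) (p : ℝ) (B₀ : Set ℝ) : Prop :=
  ∃ C > (0:ℝ), ∃ lam ≥ (1:ℝ), LipPoincareWithinC μ p C lam B₀

/-- `μ` is Lipschitz `p`-admissible within `B₀`. -/
def LipAdmissibleWithin (μ : Measure ℝ) (p : ℝ) (B₀ : Set ℝ) : Prop :=
  DoublingWithin μ B₀ ∧ LipPoincareWithin μ p B₀

/-- `μ` is locally Lipschitz `p`-admissible. -/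
def LocallyLipAdmissible (μ : Measure ℝ) (p : ℝ) : Prop :=
  ∀ x : ℝ, ∃ R > (0:ℝ), LipAdmissibleWithin μ p (Ioo (x - R) (x + R))

/-- The Muckenhoupt `A_p` condition for `w` on the set `B` with constant `C`
(for `p = 1` and `p ≠ 1` respectively). -/
def ApOn (p : ℝ) (w : ℝ → ℝ) (B : Set ℝ) (C : ℝ) : Prop :=
  (p = 1 →
    (∫⁻ x in B, ENNReal.ofReal (w x)) / volume B ≤
      ENNReal.ofReal C * essInf (fun x => ENNReal.ofReal (w x)) (volume.restrict B)) ∧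
  (p ≠ 1 →
    (∫⁻ x in B, ENNReal.ofReal (w x)) / volume B ≤
      ENNReal.ofReal C *
        ((∫⁻ x in B, ENNReal.ofReal (w x) ^ (1/(1-p))) / volume B) ^ (1-p))

/-- `w` is an `A_p` weight within `B₀`. -/
def ApWithin (p : ℝ) (w : ℝ → ℝ) (B₀ : Set ℝ) : Prop :=
  ∃ C > (0:ℝ), ∀ x r : ℝ, 0 < r → Ioo (x - r) (x + r) ⊆ B₀ →
    ApOn p w (Ioo (x - r) (x + r)) C

/-- `w` is a local `A_p` weight. -/
def LocalAp (p : ℝ) (w : ℝ → ℝ) : Prop :=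
  ∀ x : ℝ, ∃ R > (0:ℝ), ApWithin p w (Ioo (x - R) (x + R))

/-- `w` is a global `A_p` weight. -/
def GlobalAp (p : ℝ) (w : ℝ → ℝ) : Prop :=
  ∃ C > (0:ℝ), ∀ x r : ℝ, 0 < r → ApOn p w (Ioo (x - r) (x + r)) C

end

/-- `w` is a locally `p`-admissible weight on ℝ. -/
def LocallyAdmissibleWeight (p : ℝ) (w : ℝ → ℝ) : Prop :=
  (∀ x, 0 ≤ w x) ∧ MeasureTheory.LocallyIntegrable w volume ∧
  IsMeasureOnR (volume.withDensity fun x => ENNReal.ofReal (w x)) ∧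
  LocallyAdmissible (volume.withDensity fun x => ENNReal.ofReal (w x)) p


namespace ConjAux
open MeasureTheory Set Filter
open scoped ENNReal NNReal Topology

lemma doubling_three {μ : MeasureTheory.Measure ℝ} {Cd : ℝ≥0∞} {B₀ : Set ℝ}
    (hD : DoublingWithinC μ Cd B₀) {z t : ℝ} (ht : 0 < t)
    (h4 : Ioo (z - 4*t) (z + 4*t) ⊆ B₀) :
    μ (Ioo (z - 8*t) (z + 8*t)) ≤ Cd^3 * μ (Ioo (z - t) (z + t)) := by
  have h1 : Ioo (z - t) (z + t) ⊆ B₀ :=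
    (Ioo_subset_Ioo (by linarith) (by linarith)).trans h4
  have h2 : Ioo (z - 2*t) (z + 2*t) ⊆ B₀ :=
    (Ioo_subset_Ioo (by linarith) (by linarith)).trans h4
  have e1 := hD z t ht h1
  have e2 := hD z (2*t) (by linarith) h2
  have e4 := hD z (4*t) (by linarith) h4
  have r1 : (2:ℝ) * (2*t) = 4*t := by ring
  have r2 : (2:ℝ) * (4*t) = 8*t := by ring
  rw [r1] at e2
  rw [r2] at e4
  calc μ (Ioo (z - 8*t) (z + 8*t)) ≤ Cd * μ (Ioo (z - 4*t) (z + 4*t)) := e4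
    _ ≤ Cd * (Cd * μ (Ioo (z - 2*t) (z + 2*t))) := mul_le_mul_right e2 _
    _ ≤ Cd * (Cd * (Cd * μ (Ioo (z - t) (z + t)))) :=
        mul_le_mul_right (mul_le_mul_right e1 _) _
    _ = Cd^3 * μ (Ioo (z - t) (z + t)) := by ring

set_option maxHeartbeats 1600000 in
lemma stepA {p : ℝ} (hp : 1 < p) (w₁ : ℝ → ℝ) (h : LocallyAdmissibleWeight p w₁) (y : ℝ) :
    ∃ R > (0:ℝ), ∃ K : ℝ≥0∞, K ≠ ⊤ ∧ ∀ c s : ℝ, 0 < s →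
      Ioo (c - s) (c + s) ⊆ Ioo (y - R) (y + R) →
      (∫⁻ x in Ioo (c - s) (c + s), ENNReal.ofReal (w₁ x) ^ (1/(1-p))) ^ (p - 1) *
        (volume.withDensity fun x => ENNReal.ofReal (w₁ x)) (Ioo (c - s) (c + s)) ≤
        K * ENNReal.ofReal s ^ p := by
  obtain ⟨hw0, hli, hmes, hadm⟩ := h
  set μ : Measure ℝ := volume.withDensity fun x => ENNReal.ofReal (w₁ x) with hμdef
  obtain ⟨R, hR, ⟨Cd, hCd0, hCdT, hD⟩, CP, hCP, lam, hlam, hPI⟩ := hadm y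
  have hp0 : (0:ℝ) < p := by linarith
  have hp1 : p - 1 > 0 := by linarith
  set e : ℝ := 1/(1-p) with he_def
  have he_neg : e < 0 := div_neg_of_pos_of_neg one_pos (by linarith)
  -- measurable nonneg version of w₁
  have hw₁m : AEMeasurable w₁ volume := hli.aestronglyMeasurable.aemeasurable
  set w' : ℝ → ℝ := fun x => max (hw₁m.mk w₁ x) 0 with hw'def
  have hw'm : Measurable w' := hw₁m.measurable_mk.max measurable_const
  have hw'nn : ∀ x, 0 ≤ w' x := fun x => le_max_right _ _
  have hw'ae : w' =ᵐ[volume] w₁ := by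
    filter_upwards [hw₁m.ae_eq_mk] with x hx
    simp only [hw'def]
    rw [← hx, max_eq_left (hw0 x)]
  set K0 : ℝ≥0∞ := (Cd^3 * ENNReal.ofReal (2*CP))^p with hK0def
  have hK0T : K0 ≠ ⊤ := by
    refine ENNReal.rpow_ne_top_of_nonneg hp0.le ?_
    exact ENNReal.mul_ne_top (ENNReal.pow_ne_top hCdT.ne) ENNReal.ofReal_ne_top
  refine ⟨R/8, by linarith, K0, hK0T, ?_⟩
  intro c s hs hsub
  set I : Set ℝ := Ioo (c - s) (c + s) with hIdef
  obtain ⟨hc1, hc2⟩ := (Ioo_subset_Ioo_iff (by linarith : c - s < c + s)).mp hsub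
  have hsR : s ≤ R/8 := by linarith
  have hμI0 : μ I ≠ 0 := (hmes (c - s) (c + s) (by linarith)).1.ne'
  have hμIT : μ I ≠ ⊤ := (hmes (c - s) (c + s) (by linarith)).2.ne
  -- the approximating sequence
  set F : ℕ → ℝ → ℝ≥0∞ := fun k x => ENNReal.ofReal ((w' x + ((k:ℝ)+1)⁻¹) ^ e) with hFdef
  have hεpos : ∀ k : ℕ, (0:ℝ) < ((k:ℝ)+1)⁻¹ := fun k => by positivity
  have hbase : ∀ k : ℕ, ∀ x, 0 < w' x + ((k:ℝ)+1)⁻¹ :=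
    fun k x => add_pos_of_nonneg_of_pos (hw'nn x) (hεpos k)
  have hFm : ∀ k, Measurable (F k) :=
    fun k => ENNReal.measurable_ofReal.comp ((hw'm.add_const _).pow measurable_const)
  have hFmono : Monotone F := by
    intro k l hkl
    intro x
    refine ENNReal.ofReal_le_ofReal ?_
    refine Real.rpow_le_rpow_of_nonpos (hbase l x) ?_ he_neg.le
    have : ((l:ℝ)+1)⁻¹ ≤ ((k:ℝ)+1)⁻¹ := by
      apply inv_anti₀ (by positivity)
      exact_mod_cast by omega
    linarith
  -- the key inequality for each k
  have key : ∀ k : ℕ, (∫⁻ x in I, F k x) ^ (p - 1) * μ I ≤ K0 * ENNReal.ofReal s ^ p := by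
    intro k
    set ε : ℝ := ((k:ℝ)+1)⁻¹ with hεdef
    have hε : 0 < ε := hεpos k
    set g : ℝ → ℝ := I.indicator (fun x => (w' x + ε) ^ e) with hgdef
    have hgm : Measurable g := ((hw'm.add_const _).pow measurable_const).indicator measurableSet_Ioo
    have hgnn : ∀ x, 0 ≤ g x := by
      intro x
      by_cases hx : x ∈ I
      · rw [hgdef, indicator_of_mem hx]
        exact Real.rpow_nonneg (hbase k x).le _
      · rw [hgdef, indicator_of_notMem hx]
    set G : ℝ → ℝ≥0∞ := fun x => ENNReal.ofReal (g x) with hGdef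
    have hGm : Measurable G := ENNReal.measurable_ofReal.comp hgm
    have hGI : ∀ x ∈ I, G x = F k x := by
      intro x hx
      simp only [hGdef, hgdef, hFdef, indicator_of_mem hx, hεdef]
    have hGnI : ∀ x, x ∉ I → G x = 0 := by
      intro x hx
      simp only [hGdef, hgdef, indicator_of_notMem hx, ENNReal.ofReal_zero]
    set A : ℝ≥0∞ := ∫⁻ x in I, G x with hAdef
    have hAF : A = ∫⁻ x in I, F k x :=
      setLIntegral_congr_fun_ae measurableSet_Ioo (ae_of_all _ hGI)
    have hAle : A ≤ ENNReal.ofReal (ε^e) * volume I := by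
      rw [hAdef]
      calc ∫⁻ x in I, G x ≤ ∫⁻ _x in I, ENNReal.ofReal (ε^e) := by
            refine setLIntegral_mono' measurableSet_Ioo ?_
            intro x hx
            rw [hGI x hx, hFdef]
            refine ENNReal.ofReal_le_ofReal ?_
            refine Real.rpow_le_rpow_of_nonpos hε ?_ he_neg.le
            simpa [hεdef] using hw'nn x
        _ = ENNReal.ofReal (ε^e) * volume I := setLIntegral_const _ _
    have hAT : A ≠ ⊤ := by
      refine (lt_of_le_of_lt hAle ?_).ne
      exact ENNReal.mul_lt_top ENNReal.ofReal_lt_top (by simp [hIdef, Real.volume_Ioo])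
    have hA0 : A ≠ 0 := by
      rw [hAdef]
      intro h0
      have := (lintegral_eq_zero_iff' (hGm.aemeasurable.restrict)).mp h0
      have h2 : (volume.restrict I) {x | ¬ (G x = 0)} = 0 := by
        simpa [Filter.EventuallyEq, ae_iff] using this
      have h3 : I ⊆ {x | ¬ (G x = 0)} := by
        intro x hx
        have : G x = F k x := hGI x hx
        simp only [mem_setOf_eq, this, hFdef]
        simp only [ne_eq, ENNReal.ofReal_eq_zero, not_le]
        exact Real.rpow_pos_of_pos (hbase k x) _
      have h4 : (volume.restrict I) I = 0 :=
        le_antisymm (h2 ▸ measure_mono h3) zero_le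
      rw [Measure.restrict_apply' measurableSet_Ioo, inter_self] at h4
      simp [hIdef, Real.volume_Ioo] at h4
      linarith
    -- the test function
    set U : ℝ → ℝ := fun t => (∫⁻ x in I ∩ Iio t, G x).toReal with hUdef
    have hUsub : ∀ t, (∫⁻ x in I ∩ Iio t, G x) ≤ A := fun t => lintegral_mono_set inter_subset_left
    have hUmono : Monotone U := by
      intro a b hab
      exact ENNReal.toReal_mono (lt_of_le_of_lt (le_of_le_of_eq (hUsub b) rfl) (lt_of_le_of_ne le_top hAT)).ne
        (lintegral_mono_set (inter_subset_inter_right _ (Iio_subset_Iio hab)))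
    have hUm : Measurable U := hUmono.measurable
    have hU0 : ∀ t, 0 ≤ U t := fun t => ENNReal.toReal_nonneg
    have hUle : ∀ t, U t ≤ A.toReal := fun t => ENNReal.toReal_mono hAT (hUsub t)
    set B : Set ℝ := Ioo (c - 2*s) (c + 2*s) with hBdef
    set J : Set ℝ := Ioo (c - lam*(2*s)) (c + lam*(2*s)) with hJdef
    have hJlt : c - lam*(2*s) < c + lam*(2*s) := by nlinarith
    have hμJT : μ J < ⊤ := (hmes _ _ hJlt).2
    have hBsub : B ⊆ Ioo (y - R) (y + R) := Ioo_subset_Ioo (by linarith) (by linarith)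
    have hμB0 : μ B ≠ 0 := (hmes _ _ (by linarith : c - 2*s < c + 2*s)).1.ne'
    have hμBT : μ B ≠ ⊤ := (hmes _ _ (by linarith : c - 2*s < c + 2*s)).2.ne
    -- integrability of U
    have hUint : IntegrableOn U J μ := by
      refine ⟨hUm.aestronglyMeasurable, ?_⟩
      refine (hasFiniteIntegral_iff_ofReal (Eventually.of_forall fun t => hU0 t)).mpr ?_
      calc ∫⁻ t, ENNReal.ofReal (U t) ∂(μ.restrict J)
          ≤ ∫⁻ _t, ENNReal.ofReal A.toReal ∂(μ.restrict J) :=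
            lintegral_mono fun t => ENNReal.ofReal_le_ofReal (hUle t)
        _ = ENNReal.ofReal A.toReal * μ J := by
            rw [lintegral_const, Measure.restrict_apply_univ]
        _ < ⊤ := ENNReal.mul_lt_top ENNReal.ofReal_lt_top hμJT
    -- upper gradient property
    have hug : IsUpperGradientOn g U J := by
      refine ⟨hgnn, hgm, ?_⟩
      intro a b hab _
      have hsplit : (∫⁻ x in I ∩ Iio b, G x)
          = (∫⁻ x in I ∩ Iio a, G x) + ∫⁻ x in I ∩ Ico a b, G x := by
        rw [← lintegral_union (measurableSet_Ioo.inter measurableSet_Ico) ?_]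
        · rw [← inter_union_distrib_left, Iio_union_Ico_eq_Iio hab]
        · exact (Disjoint.inter_right' _ (Disjoint.inter_left' _ (by
            simp only [disjoint_left]
            intro x hx1 hx2
            exact absurd hx2.1 (not_le.mpr hx1))))
      have hfin1 : (∫⁻ x in I ∩ Iio a, G x) ≠ ⊤ := (lt_of_le_of_lt (hUsub a) (lt_of_le_of_ne le_top hAT)).ne
      have hfin2 : (∫⁻ x in I ∩ Ico a b, G x) ≠ ⊤ := by
        refine (lt_of_le_of_lt (lintegral_mono_set inter_subset_left) ?_).ne
        exact lt_of_le_of_ne le_top hAT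
      have hUab : U b - U a = (∫⁻ x in I ∩ Ico a b, G x).toReal := by
        simp only [hUdef]
        rw [hsplit, ENNReal.toReal_add hfin1 hfin2]
        ring
      rw [hUab, abs_of_nonneg ENNReal.toReal_nonneg, ENNReal.ofReal_toReal hfin2]
      refine le_trans (lintegral_mono_set ?_) (le_of_eq rfl)
      exact fun x hx => ⟨hx.2.1, hx.2.2.le⟩
    -- apply the Poincaré inequality
    have hPIap := hPI c (2*s) (by linarith) hBsub U g hUint hug
    -- lower bound for the left-hand side
    set UB : ℝ := ⨍ t in B, U t ∂μ with hUBdef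
    set L : Set ℝ := Ioo (c - 2*s) (c - s) with hLdef
    set Rr : Set ℝ := Ioo (c + s) (c + 2*s) with hRrdef
    have hUL : ∀ t ∈ L, U t = 0 := by
      intro t ht
      have : I ∩ Iio t = ∅ := by
        refine eq_empty_of_forall_notMem ?_
        rintro x ⟨hx1, hx2⟩
        have h1 : c - s < x := hx1.1
        have h2 : x < t := hx2
        have h3 : t < c - s := ht.2
        linarith
      simp [hUdef, this]
    have hUR : ∀ t ∈ Rr, U t = A.toReal := by
      intro t ht
      have : I ∩ Iio t = I := by
        refine inter_eq_left.mpr ?_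
        intro x hx
        have : x < c + s := hx.2
        have h2 : c + s < t := ht.1
        exact lt_trans this h2
      simp [hUdef, this, hAdef]
    have hLB : ∫⁻ t in L, ENNReal.ofReal |U t - UB| ∂μ = ENNReal.ofReal |UB| * μ L := by
      rw [setLIntegral_congr_fun_ae measurableSet_Ioo (ae_of_all _ (fun t ht => by
        rw [hUL t ht, zero_sub, abs_neg] : ∀ t ∈ L, ENNReal.ofReal |U t - UB| = ENNReal.ofReal |UB|))]
      exact setLIntegral_const _ _
    have hRB : ∫⁻ t in Rr, ENNReal.ofReal |U t - UB| ∂μ = ENNReal.ofReal |A.toReal - UB| * μ Rr := by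
      rw [setLIntegral_congr_fun_ae measurableSet_Ioo (ae_of_all _ (fun t ht => by
        rw [hUR t ht] : ∀ t ∈ Rr, ENNReal.ofReal |U t - UB| = ENNReal.ofReal |A.toReal - UB|))]
      exact setLIntegral_const _ _
    have hsum : ENNReal.ofReal |UB| * μ L + ENNReal.ofReal |A.toReal - UB| * μ Rr
        ≤ ∫⁻ t in B, ENNReal.ofReal |U t - UB| ∂μ := by
      rw [← hLB, ← hRB, ← lintegral_union measurableSet_Ioo ?_]
      · refine lintegral_mono_set ?_
        refine union_subset (Ioo_subset_Ioo le_rfl (by linarith)) (Ioo_subset_Ioo (by linarith) le_rfl)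
      · simp only [hLdef, hRrdef, disjoint_left]
        rintro x ⟨_, hx2⟩ ⟨hx3, _⟩
        linarith
    -- doubling bounds
    have hdL : μ B ≤ Cd^3 * μ L := by
      have hdt := doubling_three hD (z := c - (3/2)*s) (t := s/2) (by linarith)
        (by
          refine (Ioo_subset_Ioo ?_ ?_).trans (Ioo_subset_Ioo (le_refl (y-R)) (le_refl (y+R)))
          · linarith
          · linarith)
      have hz1 : c - (3/2)*s - 8*(s/2) = c - (11/2)*s := by ring
      have hz2 : c - (3/2)*s + 8*(s/2) = c + (5/2)*s := by ring
      have hz3 : c - (3/2)*s - s/2 = c - 2*s := by ring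
      have hz4 : c - (3/2)*s + s/2 = c - s := by ring
      rw [hz1, hz2, hz3, hz4] at hdt
      exact le_trans (measure_mono (Ioo_subset_Ioo (by linarith) (by linarith))) hdt
    have hdR : μ B ≤ Cd^3 * μ Rr := by
      have hdt := doubling_three hD (z := c + (3/2)*s) (t := s/2) (by linarith)
        (by
          refine Ioo_subset_Ioo ?_ ?_
          · linarith
          · linarith)
      have hz1 : c + (3/2)*s - 8*(s/2) = c - (5/2)*s := by ring
      have hz2 : c + (3/2)*s + 8*(s/2) = c + (11/2)*s := by ring
      have hz3 : c + (3/2)*s - s/2 = c + s := by ring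
      have hz4 : c + (3/2)*s + s/2 = c + 2*s := by ring
      rw [hz1, hz2, hz3, hz4] at hdt
      exact le_trans (measure_mono (Ioo_subset_Ioo (by linarith) (by linarith))) hdt
    -- A ≤ Cd^3 * PoinLHS
    have hAPL : A ≤ Cd^3 * PoinLHS μ U B := by
      have hAle2 : A ≤ ENNReal.ofReal |UB| + ENNReal.ofReal |A.toReal - UB| := by
        conv_lhs => rw [← ENNReal.ofReal_toReal hAT]
        calc ENNReal.ofReal A.toReal ≤ ENNReal.ofReal (|UB| + |A.toReal - UB|) := by
              refine ENNReal.ofReal_le_ofReal ?_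
              calc A.toReal = |UB + (A.toReal - UB)| := by
                    rw [add_sub_cancel]
                    exact (abs_of_nonneg ENNReal.toReal_nonneg).symm
                _ ≤ |UB| + |A.toReal - UB| := abs_add_le _ _
          _ ≤ ENNReal.ofReal |UB| + ENNReal.ofReal |A.toReal - UB| := ENNReal.ofReal_add_le
      have h1 : A * μ B ≤ Cd^3 * ∫⁻ t in B, ENNReal.ofReal |U t - UB| ∂μ := by
        calc A * μ B ≤ (ENNReal.ofReal |UB| + ENNReal.ofReal |A.toReal - UB|) * μ B :=
              mul_le_mul_left hAle2 _
          _ = ENNReal.ofReal |UB| * μ B + ENNReal.ofReal |A.toReal - UB| * μ B := add_mul _ _ _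
          _ ≤ ENNReal.ofReal |UB| * (Cd^3 * μ L) + ENNReal.ofReal |A.toReal - UB| * (Cd^3 * μ Rr) :=
              add_le_add (mul_le_mul_right hdL _) (mul_le_mul_right hdR _)
          _ = Cd^3 * (ENNReal.ofReal |UB| * μ L + ENNReal.ofReal |A.toReal - UB| * μ Rr) := by ring
          _ ≤ Cd^3 * ∫⁻ t in B, ENNReal.ofReal |U t - UB| ∂μ := mul_le_mul_right hsum _
      have hPL : PoinLHS μ U B = (∫⁻ t in B, ENNReal.ofReal |U t - UB| ∂μ) / μ B := rfl
      have hassoc : Cd^3 * ((∫⁻ t in B, ENNReal.ofReal |U t - UB| ∂μ) / μ B)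
          = (Cd^3 * ∫⁻ t in B, ENNReal.ofReal |U t - UB| ∂μ) / μ B := by
        rw [div_eq_mul_inv, div_eq_mul_inv, mul_assoc]
      rw [hPL, hassoc, ENNReal.le_div_iff_mul_le (Or.inl hμB0) (Or.inl hμBT)]
      exact h1
    -- upper bound for the right-hand side
    have hN : (∫⁻ t in J, (ENNReal.ofReal (g t)) ^ p ∂μ) ≤ A := by
      rw [hμdef, setLIntegral_withDensity_eq_setLIntegral_mul_non_measurable₀ _
        (hw₁m.restrict.ennreal_ofReal) _ measurableSet_Ioo
        (ae_of_all _ fun x => ENNReal.ofReal_lt_top)]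
      have hptwise : ∀ᵐ x ∂(volume.restrict J),
          ((fun x => ENNReal.ofReal (w₁ x)) * fun t => ENNReal.ofReal (g t) ^ p) x ≤ G x := by
        filter_upwards [ae_restrict_of_ae hw'ae] with x hx
        simp only [Pi.mul_apply]
        by_cases hxI : x ∈ I
        · have hb := hbase k x
          have h1p : (1:ℝ) - p ≠ 0 := by linarith
          have hexp : 1 + e*p = e := by
            rw [he_def]
            field_simp
            ring
          have hGx : G x = ENNReal.ofReal ((w' x + ε) ^ e) := by
            simp only [hGdef, hgdef, indicator_of_mem hxI]
          rw [hGx, hgdef, indicator_of_mem hxI, ← hx]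
          rw [ENNReal.ofReal_rpow_of_pos (Real.rpow_pos_of_pos hb _), ← Real.rpow_mul hb.le]
          calc ENNReal.ofReal (w' x) * ENNReal.ofReal ((w' x + ε) ^ (e*p))
              ≤ ENNReal.ofReal (w' x + ε) * ENNReal.ofReal ((w' x + ε) ^ (e*p)) :=
                mul_le_mul_left (ENNReal.ofReal_le_ofReal (by linarith)) _
            _ = ENNReal.ofReal ((w' x + ε) * (w' x + ε) ^ (e*p)) :=
                (ENNReal.ofReal_mul hb.le).symm
            _ = ENNReal.ofReal ((w' x + ε) ^ (1 + e*p)) := by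
                rw [Real.rpow_add hb, Real.rpow_one]
            _ = ENNReal.ofReal ((w' x + ε) ^ e) := by rw [hexp]
        · rw [hgdef, indicator_of_notMem hxI]
          simp only [ENNReal.ofReal_zero]
          rw [ENNReal.zero_rpow_of_pos hp0, mul_zero]
          exact le_of_eq (hGnI x hxI).symm
      calc (∫⁻ x in J, ((fun x => ENNReal.ofReal (w₁ x)) * fun t => ENNReal.ofReal (g t) ^ p) x)
          ≤ ∫⁻ x in J, G x := lintegral_mono_ae hptwise
        _ ≤ ∫⁻ x, G x := setLIntegral_le_lintegral _ _
        _ = ∫⁻ x in I, ENNReal.ofReal ((w' x + ε) ^ e) := by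
            have : G = I.indicator (fun x => ENNReal.ofReal ((w' x + ε) ^ e)) := by
              funext x
              by_cases hx : x ∈ I
              · rw [indicator_of_mem hx]
                exact hGI x hx
              · rw [indicator_of_notMem hx]
                exact hGnI x hx
            rw [this, lintegral_indicator measurableSet_Ioo]
        _ = A := (setLIntegral_congr_fun_ae measurableSet_Ioo (ae_of_all _ fun x hx => by
            rw [hGI x hx, hFdef])).symm
    have hIJ : I ⊆ J := Ioo_subset_Ioo (by nlinarith) (by nlinarith)
    have hRHSle : PoinRHS μ (fun t => ENNReal.ofReal (g t)) p J ≤ (A / μ I)^(1/p) := by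
      refine ENNReal.rpow_le_rpow ?_ (by positivity)
      exact ENNReal.div_le_div hN (measure_mono hIJ)
    -- combine
    have hmain : A ≤ (Cd^3 * ENNReal.ofReal (CP * (2*s))) * (A / μ I)^(1/p) := by
      calc A ≤ Cd^3 * PoinLHS μ U B := hAPL
        _ ≤ Cd^3 * (ENNReal.ofReal (CP * (2*s)) *
            PoinRHS μ (fun t => ENNReal.ofReal (g t)) p J) := mul_le_mul_right hPIap _
        _ ≤ Cd^3 * (ENNReal.ofReal (CP * (2*s)) * (A / μ I)^(1/p)) :=
            mul_le_mul_right (mul_le_mul_right hRHSle _) _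
        _ = (Cd^3 * ENNReal.ofReal (CP * (2*s))) * (A / μ I)^(1/p) := by ring
    -- algebra to conclude
    set m : ℝ≥0∞ := μ I with hmdef
    have hApowT : A^(1/p) ≠ ⊤ := ENNReal.rpow_ne_top_of_nonneg (by positivity) hAT
    have hApow0 : A^(1/p) ≠ 0 := by
      intro h0
      rcases ENNReal.rpow_eq_zero_iff.mp h0 with ⟨h1, _⟩ | ⟨h1, _⟩
      · exact hA0 h1
      · exact hAT h1
    have hdiv : (A / m)^(1/p) = A^(1/p) * (m^(1/p))⁻¹ := by
      rw [ENNReal.div_rpow_of_nonneg _ _ (by positivity), div_eq_mul_inv]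
    have hsplitA : A = A^(1-1/p) * A^(1/p) := by
      rw [← ENNReal.rpow_add _ _ hA0 hAT, sub_add_cancel, ENNReal.rpow_one]
    have hZ : A^(1-1/p) * A^(1/p)
        ≤ ((Cd^3 * ENNReal.ofReal (CP*(2*s))) * (m^(1/p))⁻¹) * A^(1/p) := by
      calc A^(1-1/p) * A^(1/p) = A := hsplitA.symm
        _ ≤ (Cd^3 * ENNReal.ofReal (CP * (2*s))) * (A / m)^(1/p) := hmain
        _ = ((Cd^3 * ENNReal.ofReal (CP*(2*s))) * (m^(1/p))⁻¹) * A^(1/p) := by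
            rw [hdiv]; ring
    have h4 : A^(1-1/p) ≤ (Cd^3 * ENNReal.ofReal (CP*(2*s))) * (m^(1/p))⁻¹ :=
      (ENNReal.mul_le_mul_iff_left hApow0 hApowT).mp hZ
    have h5 := ENNReal.rpow_le_rpow h4 hp0.le
    have hex1 : (1-1/p)*p = p - 1 := by field_simp
    have hex2 : (1/p)*p = 1 := by field_simp
    rw [← ENNReal.rpow_mul, hex1] at h5
    have hRHS5 : ((Cd^3 * ENNReal.ofReal (CP*(2*s))) * (m^(1/p))⁻¹)^p
        = (Cd^3 * ENNReal.ofReal (CP*(2*s)))^p * m⁻¹ := by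
      rw [ENNReal.mul_rpow_of_nonneg _ _ hp0.le, ENNReal.inv_rpow, ← ENNReal.rpow_mul, hex2,
        ENNReal.rpow_one]
    rw [hRHS5] at h5
    have h6 : A^(p-1) * m ≤ (Cd^3 * ENNReal.ofReal (CP*(2*s)))^p := by
      calc A^(p-1) * m ≤ ((Cd^3 * ENNReal.ofReal (CP*(2*s)))^p * m⁻¹) * m :=
            mul_le_mul_left h5 _
        _ = (Cd^3 * ENNReal.ofReal (CP*(2*s)))^p * (m⁻¹ * m) := mul_assoc _ _ _
        _ = (Cd^3 * ENNReal.ofReal (CP*(2*s)))^p := by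
            rw [ENNReal.inv_mul_cancel hμI0 hμIT, mul_one]
    have hZK : (Cd^3 * ENNReal.ofReal (CP*(2*s)))^p = K0 * ENNReal.ofReal s ^ p := by
      have hss : ENNReal.ofReal (CP*(2*s)) = ENNReal.ofReal (2*CP) * ENNReal.ofReal s := by
        rw [← ENNReal.ofReal_mul (by positivity)]
        congr 1
        ring
      rw [hss, ← mul_assoc, hK0def, ← ENNReal.mul_rpow_of_nonneg _ _ hp0.le]
    rw [← hAF]
    exact le_trans h6 (le_of_eq hZK)
  -- pass to the limit
  have hmonoB : Monotone (fun k => ∫⁻ x in I, F k x) :=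
    fun k l hkl => lintegral_mono (fun x => hFmono hkl x)
  have htend : Tendsto (fun k => ∫⁻ x in I, F k x) atTop
      (𝓝 (⨆ k, ∫⁻ x in I, F k x)) := tendsto_atTop_iSup hmonoB
  have hsupF : ∀ x, (⨆ k, F k x) = ENNReal.ofReal (w' x) ^ e := by
    intro x
    rcases eq_or_lt_of_le (hw'nn x) with h0 | hpos
    · rw [← h0, ENNReal.ofReal_zero, ENNReal.zero_rpow_of_neg he_neg]
      refine iSup_eq_top.mpr ?_
      intro b hb
      have htt : Tendsto (fun k : ℕ => (((k:ℝ)+1))^(-e)) atTop atTop :=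
        (tendsto_rpow_atTop (by linarith)).comp
          (tendsto_atTop_add_const_right _ 1 tendsto_natCast_atTop_atTop)
      obtain ⟨k, hk⟩ := (htt.eventually_gt_atTop b.toReal).exists
      refine ⟨k, ?_⟩
      have hFk : F k x = ENNReal.ofReal ((((k:ℝ)+1))^(-e)) := by
        simp only [hFdef]
        rw [← h0, zero_add]
        congr 1
        rw [Real.inv_rpow (by positivity), ← Real.rpow_neg (by positivity)]
      rw [hFk, ← ENNReal.ofReal_toReal hb.ne]
      exact (ENNReal.ofReal_lt_ofReal_iff (Real.rpow_pos_of_pos (by positivity) _)).mpr hk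
    · have hmono' : Monotone (fun k => F k x) := fun k l hkl => hFmono hkl x
      refine iSup_eq_of_tendsto hmono' ?_
      have h1 : Tendsto (fun k : ℕ => ((k:ℝ)+1)⁻¹) atTop (𝓝 0) :=
        tendsto_inv_atTop_zero.comp
          (tendsto_atTop_add_const_right _ 1 tendsto_natCast_atTop_atTop)
      have h2 : Tendsto (fun k : ℕ => w' x + ((k:ℝ)+1)⁻¹) atTop (𝓝 (w' x)) := by
        simpa using tendsto_const_nhds.add h1
      have h3 : Tendsto (fun k : ℕ => (w' x + ((k:ℝ)+1)⁻¹) ^ e) atTop (𝓝 ((w' x) ^ e)) :=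
        ((Real.continuousAt_rpow_const _ e (Or.inl hpos.ne')).tendsto).comp h2
      have h4 := (ENNReal.continuous_ofReal.tendsto _).comp h3
      rw [ENNReal.ofReal_rpow_of_pos hpos]
      exact h4
  have hYsup : (∫⁻ x in I, ENNReal.ofReal (w₁ x) ^ e) = ⨆ k, ∫⁻ x in I, F k x := by
    have h1 : (∫⁻ x in I, ENNReal.ofReal (w₁ x) ^ e)
        = ∫⁻ x in I, ENNReal.ofReal (w' x) ^ e := by
      refine lintegral_congr_ae ?_
      filter_upwards [ae_restrict_of_ae hw'ae] with x hx
      rw [hx]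
    rw [h1, ← lintegral_iSup hFm hFmono]
    exact lintegral_congr fun x => (hsupF x).symm
  rw [hYsup]
  have hcont : Tendsto (fun kk => (∫⁻ x in I, F kk x)^(p-1) * μ I) atTop
      (𝓝 ((⨆ k, ∫⁻ x in I, F k x)^(p-1) * μ I)) :=
    ENNReal.Tendsto.mul_const ((ENNReal.continuous_rpow_const.tendsto _).comp htend) (Or.inr hμIT)
  exact le_of_tendsto hcont (Eventually.of_forall key)

lemma pos_ae {p : ℝ} (hp : 1 < p) (w₁ : ℝ → ℝ) (h : LocallyAdmissibleWeight p w₁) :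
    ∀ᵐ x ∂volume, 0 < w₁ x := by
  have hp1 : (0:ℝ) < p - 1 := by linarith
  have he_neg : 1/(1-p) < 0 := div_neg_of_pos_of_neg one_pos (by linarith)
  have hmes := h.2.2.1
  rw [ae_iff]
  refine measure_null_of_locally_null _ fun x _ => ?_
  obtain ⟨R, hR, K, hKT, hb⟩ := stepA hp w₁ h x
  refine ⟨Ioo (x - R) (x + R) ∩ {t | ¬ 0 < w₁ t}, ?_, ?_⟩
  · exact inter_mem (mem_nhdsWithin_of_mem_nhds (Ioo_mem_nhds (by linarith) (by linarith)))
      self_mem_nhdsWithin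
  · have hbb := hb x R hR (subset_refl _)
    have hμ0 : (volume.withDensity fun t => ENNReal.ofReal (w₁ t)) (Ioo (x-R) (x+R)) ≠ 0 :=
      (hmes (x-R) (x+R) (by linarith)).1.ne'
    have hY : (∫⁻ t in Ioo (x-R) (x+R), ENNReal.ofReal (w₁ t) ^ (1/(1-p))) ≠ ⊤ := by
      intro hT
      rw [hT, ENNReal.top_rpow_of_pos hp1, ENNReal.top_mul hμ0] at hbb
      exact (ENNReal.mul_ne_top hKT
        (ENNReal.rpow_ne_top_of_nonneg (by linarith) ENNReal.ofReal_ne_top)) (top_le_iff.mp hbb)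
    have hVae : AEMeasurable (fun t => ENNReal.ofReal (w₁ t) ^ (1/(1-p)))
        (volume.restrict (Ioo (x-R) (x+R))) :=
      ((h.2.1.aestronglyMeasurable.aemeasurable.restrict).ennreal_ofReal).pow aemeasurable_const
    have hae := ae_lt_top' hVae hY
    rw [ae_iff] at hae
    have hsub : {t | ¬ 0 < w₁ t} ⊆ {t | ¬ ENNReal.ofReal (w₁ t) ^ (1/(1-p)) < ⊤} := by
      intro t ht
      simp only [mem_setOf_eq, not_lt] at *
      have h0 : ENNReal.ofReal (w₁ t) = 0 := by
        rw [ENNReal.ofReal_eq_zero]; exact ht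
      rw [h0, ENNReal.zero_rpow_of_neg he_neg]
    have h0 : (volume.restrict (Ioo (x-R) (x+R))) {t | ¬ 0 < w₁ t} = 0 :=
      measure_mono_null hsub hae
    rw [Measure.restrict_apply' measurableSet_Ioo] at h0
    rw [inter_comm] at h0
    exact h0

lemma holder_vol {p : ℝ} (hp : 1 < p) {w₁ : ℝ → ℝ} (hm : AEMeasurable w₁ volume)
    (hpos : ∀ᵐ x ∂volume, 0 < w₁ x) (S : Set ℝ) :
    volume S ≤ (∫⁻ x in S, ENNReal.ofReal (w₁ x))^(1/p) *
      (∫⁻ x in S, ENNReal.ofReal (w₁ x) ^ (1/(1-p)))^(1-1/p) := by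
  have hp0 : (0:ℝ) < p := by linarith
  have hconj : p.HolderConjugate (p/(p-1)) := Real.HolderConjugate.conjExponent hp
  have hWae : AEMeasurable (fun x => ENNReal.ofReal (w₁ x)) (volume.restrict S) :=
    hm.restrict.ennreal_ofReal
  have hfae : AEMeasurable (fun x => ENNReal.ofReal (w₁ x) ^ (1/p)) (volume.restrict S) :=
    hWae.pow aemeasurable_const
  have hgae : AEMeasurable (fun x => ENNReal.ofReal (w₁ x) ^ (-(1/p))) (volume.restrict S) :=
    hWae.pow aemeasurable_const
  have key := ENNReal.lintegral_mul_le_Lp_mul_Lq (volume.restrict S) hconj hfae hgae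
  have h1 : (∫⁻ x, ((fun x => ENNReal.ofReal (w₁ x) ^ (1/p)) *
      fun x => ENNReal.ofReal (w₁ x) ^ (-(1/p))) x ∂(volume.restrict S)) = volume S := by
    have : (∫⁻ x, (1:ℝ≥0∞) ∂(volume.restrict S)) = volume S := by
      rw [lintegral_one, Measure.restrict_apply_univ]
    rw [← this]
    refine lintegral_congr_ae ?_
    filter_upwards [ae_restrict_of_ae hpos] with x hx
    simp only [Pi.mul_apply]
    rw [← ENNReal.rpow_add _ _ (ENNReal.ofReal_pos.mpr hx).ne' ENNReal.ofReal_ne_top]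
    rw [add_neg_cancel, ENNReal.rpow_zero]
  have h2 : (∫⁻ x, (ENNReal.ofReal (w₁ x) ^ (1/p)) ^ p ∂(volume.restrict S))
      = ∫⁻ x in S, ENNReal.ofReal (w₁ x) := by
    refine lintegral_congr fun x => ?_
    have hinv : (1/p)*p = 1 := by field_simp
    rw [← ENNReal.rpow_mul, hinv, ENNReal.rpow_one]
  have h3 : (∫⁻ x, (ENNReal.ofReal (w₁ x) ^ (-(1/p))) ^ (p/(p-1)) ∂(volume.restrict S))
      = ∫⁻ x in S, ENNReal.ofReal (w₁ x) ^ (1/(1-p)) := by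
    refine lintegral_congr fun x => ?_
    have ha : (p:ℝ) - 1 ≠ 0 := ne_of_gt (by linarith)
    have hb : (1:ℝ) - p ≠ 0 := ne_of_lt (by linarith)
    have hexp : (-(1/p)) * (p/(p-1)) = 1/(1-p) := by
      field_simp
      ring
    rw [← ENNReal.rpow_mul, hexp]
  have h4 : (1:ℝ)/(p/(p-1)) = 1 - 1/p := by field_simp
  rw [h1, h2, h3, h4] at key
  exact key

lemma poinLHS_le {ν : MeasureTheory.Measure ℝ} {B : Set ℝ} (hmeas : MeasurableSet B)
    (hν0 : ν B ≠ 0) (hνT : ν B ≠ ⊤) {u : ℝ → ℝ} (hu : IntegrableOn u B ν)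
    {M : ℝ≥0∞} (hosc : ∀ t ∈ B, ∀ t' ∈ B, ENNReal.ofReal |u t' - u t| ≤ M) :
    PoinLHS ν u B ≤ M := by
  rcases eq_top_or_lt_top M with hM | hM
  · rw [hM]; exact le_top
  haveI : IsFiniteMeasure (ν.restrict B) :=
    ⟨by rwa [Measure.restrict_apply_univ, lt_top_iff_ne_top]⟩
  set uB : ℝ := ⨍ t in B, u t ∂ν with huB
  have hνBpos : 0 < (ν B).toReal := ENNReal.toReal_pos hν0 hνT
  have hbd : ∀ t ∈ B, |u t - uB| ≤ M.toReal := by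
    intro t ht
    have hint : |∫ s in B, (u t - u s) ∂ν| ≤ M.toReal * (ν B).toReal := by
      have hb := norm_integral_le_of_norm_le_const (μ := ν.restrict B)
        (f := fun s => u t - u s) (C := M.toReal) ?_
      · rw [Real.norm_eq_abs] at hb
        rwa [measureReal_restrict_apply_univ, measureReal_def] at hb
      · filter_upwards [ae_restrict_mem hmeas] with s hs
        rw [Real.norm_eq_abs]
        exact (ENNReal.ofReal_le_iff_le_toReal hM.ne).mp (hosc s hs t ht)
    have hsub : ∫ s in B, (u t - u s) ∂ν = (ν B).toReal * u t - ∫ s in B, u s ∂ν := by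
      rw [integral_sub (integrable_const _) hu, integral_const,
        measureReal_restrict_apply_univ, measureReal_def, smul_eq_mul]
    have havg : uB = (ν B).toReal⁻¹ * ∫ s in B, u s ∂ν := by
      rw [huB, average_eq, measureReal_restrict_apply_univ, measureReal_def, smul_eq_mul]
    have hdec : u t - uB = (ν B).toReal⁻¹ * ∫ s in B, (u t - u s) ∂ν := by
      rw [hsub, havg, mul_sub, ← mul_assoc, inv_mul_cancel₀ (ne_of_gt hνBpos), one_mul]
    rw [hdec, abs_mul, abs_of_nonneg (inv_nonneg.mpr hνBpos.le)]
    calc (ν B).toReal⁻¹ * |∫ s in B, (u t - u s) ∂ν|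
        ≤ (ν B).toReal⁻¹ * (M.toReal * (ν B).toReal) :=
          mul_le_mul_of_nonneg_left hint (inv_nonneg.mpr hνBpos.le)
      _ = M.toReal := by
            rw [mul_comm M.toReal, ← mul_assoc, inv_mul_cancel₀ (ne_of_gt hνBpos), one_mul]
  have hlin : (∫⁻ t in B, ENNReal.ofReal |u t - uB| ∂ν) ≤ M * ν B := by
    calc (∫⁻ t in B, ENNReal.ofReal |u t - uB| ∂ν)
        ≤ ∫⁻ _t in B, M ∂ν := by
          refine setLIntegral_mono' hmeas fun t ht => ?_
          calc ENNReal.ofReal |u t - uB| ≤ ENNReal.ofReal M.toReal :=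
                ENNReal.ofReal_le_ofReal (hbd t ht)
            _ = M := ENNReal.ofReal_toReal hM.ne
      _ = M * ν B := setLIntegral_const _ _
  have hPL : PoinLHS ν u B = (∫⁻ t in B, ENNReal.ofReal |u t - uB| ∂ν) / ν B := rfl
  rw [hPL, ENNReal.div_le_iff hν0 hνT]
  exact hlin

end ConjAux
set_option maxHeartbeats 3200000
/-- if `w₁` is a locally `p`-admissible weight on ℝ with
`p > 1`, then `w₁^{1/(1-p)}` is a locally `p/(p-1)`-admissible weight. -/
theorem conjugate_locally_admissible_weight (p : ℝ) (hp : 1 < p)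
    (w₁ : ℝ → ℝ) (h : LocallyAdmissibleWeight p w₁) :
    LocallyAdmissibleWeight (p/(p-1)) (fun x => w₁ x ^ (1/(1-p))) := by
  have hp0 : (0:ℝ) < p := by linarith
  have hp1 : (0:ℝ) < p - 1 := by linarith
  have hq0 : (0:ℝ) < p/(p-1) := by positivity
  have hpne : p ≠ 0 := ne_of_gt hp0
  have hp1ne : p - 1 ≠ 0 := ne_of_gt hp1
  have h1pne : (1:ℝ) - p ≠ 0 := sub_ne_zero.mpr (by linarith)
  have hw0 := h.1
  have hw₁m : AEMeasurable w₁ volume := h.2.1.aestronglyMeasurable.aemeasurable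
  have hmes := h.2.2.1
  have hpos : ∀ᵐ x ∂volume, 0 < w₁ x := ConjAux.pos_ae hp w₁ h
  set V : ℝ → ℝ≥0∞ := fun x => ENNReal.ofReal (w₁ x) ^ (1/(1-p)) with hVdef
  set ν : Measure ℝ := volume.withDensity V with hνdef
  set μ : Measure ℝ := volume.withDensity (fun x => ENNReal.ofReal (w₁ x)) with hμdef
  have hVae : AEMeasurable V volume := hw₁m.ennreal_ofReal.pow aemeasurable_const
  have hVpos : ∀ x, 0 < w₁ x → (V x ≠ 0 ∧ V x ≠ ⊤) := by
    intro x hx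
    constructor
    · intro h0
      rcases ENNReal.rpow_eq_zero_iff.mp h0 with ⟨h1, _⟩ | ⟨h1, _⟩
      · exact (ENNReal.ofReal_pos.mpr hx).ne' h1
      · exact ENNReal.ofReal_ne_top h1
    · intro h0
      rcases ENNReal.rpow_eq_top_iff.mp h0 with ⟨h1, _⟩ | ⟨h1, _⟩
      · exact (ENNReal.ofReal_pos.mpr hx).ne' h1
      · exact ENNReal.ofReal_ne_top h1
  have hdens_ae : (fun x => ENNReal.ofReal (w₁ x ^ (1/(1-p)))) =ᵐ[volume] V := by
    filter_upwards [hpos] with x hx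
    exact (ENNReal.ofReal_rpow_of_pos hx).symm
  have hmeq : (volume.withDensity fun x => ENNReal.ofReal (w₁ x ^ (1/(1-p)))) = ν :=
    withDensity_congr_ae hdens_ae
  -- the fundamental local bound
  have main : ∀ y : ℝ, ∃ R > (0:ℝ), ∃ K : ℝ≥0∞, K ≠ ⊤ ∧ ∀ c s : ℝ, 0 < s →
      Ioo (c - s) (c + s) ⊆ Ioo (y - R) (y + R) →
      (ν (Ioo (c-s) (c+s))) ^ (p-1) * μ (Ioo (c-s) (c+s)) ≤ K * ENNReal.ofReal s ^ p := by
    intro y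
    obtain ⟨R, hR, K, hKT, hb⟩ := ConjAux.stepA hp w₁ h y
    refine ⟨R, hR, K, hKT, fun c s hs hsub => ?_⟩
    rw [hνdef, withDensity_apply _ measurableSet_Ioo]
    exact hb c s hs hsub
  have hνfin : ∀ y R : ℝ, ∀ K : ℝ≥0∞, K ≠ ⊤ → (∀ c s : ℝ, 0 < s →
      Ioo (c-s) (c+s) ⊆ Ioo (y-R) (y+R) →
      ν (Ioo (c-s) (c+s)) ^ (p-1) * μ (Ioo (c-s) (c+s)) ≤ K * ENNReal.ofReal s ^ p) →
      ∀ c s : ℝ, 0 < s → Ioo (c-s) (c+s) ⊆ Ioo (y-R) (y+R) → ν (Ioo (c-s) (c+s)) ≠ ⊤ := by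
    intro y R K hKT hb c s hs hsub hT
    have hbb := hb c s hs hsub
    rw [hT, ENNReal.top_rpow_of_pos hp1, ENNReal.top_mul (hmes _ _ (by linarith)).1.ne'] at hbb
    exact (ENNReal.mul_ne_top hKT (ENNReal.rpow_ne_top_of_nonneg hp0.le ENNReal.ofReal_ne_top))
      (top_le_iff.mp hbb)
  have hνball : ∀ y : ℝ, ∃ R > (0:ℝ), ν (Ioo (y - R) (y + R)) ≠ ⊤ := by
    intro y
    obtain ⟨R, hR, K, hKT, hb⟩ := main y
    exact ⟨R, hR, hνfin y R K hKT hb y R hR (subset_refl _)⟩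
  have hνpos : ∀ a b : ℝ, a < b → 0 < ν (Ioo a b) := by
    intro a b hab
    rcases eq_zero_or_pos (ν (Ioo a b)) with h0 | hgt
    · exfalso
      rw [hνdef, withDensity_apply _ measurableSet_Ioo] at h0
      have h1 := (lintegral_eq_zero_iff' hVae.restrict).mp h0
      have h2 : ∀ᵐ x ∂(volume.restrict (Ioo a b)), False := by
        filter_upwards [h1, ae_restrict_of_ae hpos] with x hx1 hx2
        exact (hVpos x hx2).1 hx1
      rw [ae_iff] at h2
      have huniv : {x : ℝ | ¬False} = univ := by simp
      rw [huniv, Measure.restrict_apply_univ] at h2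
      rw [Real.volume_Ioo] at h2
      simp only [ENNReal.ofReal_eq_zero] at h2
      linarith
    · exact hgt
  have hνfinall : ∀ a b : ℝ, ν (Ioo a b) < ⊤ := by
    intro a b
    choose Rf hRf hνf using hνball
    have hcov : Icc a b ⊆ ⋃ z : ℝ, Ioo (z - Rf z) (z + Rf z) := by
      intro z _
      exact mem_iUnion.mpr ⟨z, by constructor <;> simp <;> linarith [hRf z]⟩
    obtain ⟨t, ht⟩ := isCompact_Icc.elim_finite_subcover _ (fun z : ℝ => isOpen_Ioo) hcov
    calc ν (Ioo a b) ≤ ν (⋃ z ∈ t, Ioo (z - Rf z) (z + Rf z)) :=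
          measure_mono (Ioo_subset_Icc_self.trans ht)
      _ ≤ ∑ z ∈ t, ν (Ioo (z - Rf z) (z + Rf z)) := measure_biUnion_finset_le _ _
      _ < ⊤ := ENNReal.sum_lt_top.mpr fun z _ => lt_of_le_of_ne le_top (hνf z)
  refine ⟨fun x => Real.rpow_nonneg (hw0 x) _, ?_, ?_, ?_⟩
  · -- locally integrable
    intro x₀
    refine ⟨Ioo (x₀ - 1) (x₀ + 1), Ioo_mem_nhds (by linarith) (by linarith), ?_⟩
    refine ⟨((hw₁m.pow aemeasurable_const).restrict).aestronglyMeasurable, ?_⟩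
    refine (hasFiniteIntegral_iff_ofReal
      (Eventually.of_forall fun x => Real.rpow_nonneg (hw0 x) _)).mpr ?_
    have heq : (∫⁻ x, ENNReal.ofReal (w₁ x ^ (1/(1-p))) ∂(volume.restrict (Ioo (x₀-1) (x₀+1))))
        = ν (Ioo (x₀-1) (x₀+1)) := by
      rw [hνdef, withDensity_apply _ measurableSet_Ioo]
      exact lintegral_congr_ae (ae_restrict_of_ae hdens_ae)
    rw [heq]
    exact hνfinall _ _
  · -- IsMeasureOnR
    show IsMeasureOnR (volume.withDensity fun x => ENNReal.ofReal (w₁ x ^ (1/(1-p))))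
    rw [hmeq]
    exact fun a b hab => ⟨hνpos a b hab, hνfinall a b⟩
  · -- LocallyAdmissible
    show LocallyAdmissible (volume.withDensity fun x => ENNReal.ofReal (w₁ x ^ (1/(1-p)))) (p/(p-1))
    rw [hmeq]
    intro x₀
    obtain ⟨R, hR, K, hKT, hb⟩ := main x₀
    have hKpow : K ^ ((1:ℝ)/(p-1)) ≠ ⊤ :=
      ENNReal.rpow_ne_top_of_nonneg (by positivity) hKT
    have hballs : ∀ x r : ℝ, 0 < r → Ioo (x - r) (x + r) ⊆ Ioo (x₀ - R/3) (x₀ + R/3) →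
        Ioo (x - r) (x + r) ⊆ Ioo (x₀ - R) (x₀ + R) ∧
        Ioo (x - 2*r) (x + 2*r) ⊆ Ioo (x₀ - R) (x₀ + R) := by
      intro x r hr hsub
      obtain ⟨h1, h2⟩ := (Ioo_subset_Ioo_iff (by linarith : x - r < x + r)).mp hsub
      exact ⟨Ioo_subset_Ioo (by linarith) (by linarith),
        Ioo_subset_Ioo (by linarith) (by linarith)⟩
    -- the A_q type bound
    have hAq : ∀ x r : ℝ, 0 < r → Ioo (x - r) (x + r) ⊆ Ioo (x₀ - R) (x₀ + R) →
        ν (Ioo (x-r) (x+r)) ^ ((p-1)/p) * μ (Ioo (x-r) (x+r)) ^ ((1:ℝ)/p)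
          ≤ K ^ ((1:ℝ)/p) * ENNReal.ofReal r := by
      intro x r hr hsub
      have hbb := hb x r hr hsub
      have h5 := ENNReal.rpow_le_rpow hbb
        (div_nonneg (by linarith : (0:ℝ) ≤ p - 1) hp0.le)
      have eL : (ν (Ioo (x-r) (x+r)) ^ (p-1) * μ (Ioo (x-r) (x+r))) ^ ((p-1)/p)
          = (ν (Ioo (x-r) (x+r)) ^ ((p-1)*((p-1)/p))) * μ (Ioo (x-r) (x+r)) ^ ((p-1)/p) := by
        rw [ENNReal.mul_rpow_of_nonneg _ _ (div_nonneg (by linarith) hp0.le),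
          ← ENNReal.rpow_mul]
      have eR : (K * ENNReal.ofReal r ^ p) ^ ((p-1)/p)
          = K ^ ((p-1)/p) * ENNReal.ofReal r ^ (p*((p-1)/p)) := by
        rw [ENNReal.mul_rpow_of_nonneg _ _ (div_nonneg (by linarith) hp0.le),
          ← ENNReal.rpow_mul]
      rw [eL, eR] at h5
      have e5 : p * ((p-1)/p) = p - 1 := by
        rw [mul_comm, div_mul_cancel₀ _ hpne]
      rw [e5] at h5
      -- h5 : ν^((p-1)*((p-1)/p)) * μ^((p-1)/p) ≤ K^((p-1)/p) * ofReal r ^ (p-1)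
      -- now raise to 1/(p-1)
      have h6 := ENNReal.rpow_le_rpow h5 (by positivity : (0:ℝ) ≤ 1/(p-1))
      have eL2 : ((ν (Ioo (x-r) (x+r)) ^ ((p-1)*((p-1)/p))) * μ (Ioo (x-r) (x+r)) ^ ((p-1)/p)) ^ ((1:ℝ)/(p-1))
          = ν (Ioo (x-r) (x+r)) ^ ((p-1)*((p-1)/p)*(1/(p-1)))
            * μ (Ioo (x-r) (x+r)) ^ ((p-1)/p*(1/(p-1))) := by
        rw [ENNReal.mul_rpow_of_nonneg _ _ (by positivity), ← ENNReal.rpow_mul, ← ENNReal.rpow_mul]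
      have eR2 : (K ^ ((p-1)/p) * ENNReal.ofReal r ^ (p-1)) ^ ((1:ℝ)/(p-1))
          = K ^ ((p-1)/p*(1/(p-1))) * ENNReal.ofReal r ^ ((p-1)*(1/(p-1))) := by
        rw [ENNReal.mul_rpow_of_nonneg _ _ (by positivity), ← ENNReal.rpow_mul, ← ENNReal.rpow_mul]
      rw [eL2, eR2] at h6
      have f1 : (p-1)*((p-1)/p)*(1/(p-1)) = (p-1)/p := by
        rw [mul_right_comm, mul_one_div, div_self hp1ne, one_mul]
      have f2 : (p-1)/p*(1/(p-1)) = 1/p := by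
        rw [div_mul_div_comm, mul_one, mul_comm p (p-1), ← div_div, div_self hp1ne]
      have f3 : (p-1)*(1/(p-1)) = 1 := by field_simp
      rw [f1, f2, f3, ENNReal.rpow_one] at h6
      exact h6
    refine ⟨R/3, by linarith, ⟨K ^ ((1:ℝ)/(p-1)) + 1, ?_, ?_, ?_⟩, ?_⟩
    · exact lt_of_lt_of_le zero_lt_one le_add_self
    · exact ENNReal.add_lt_top.mpr ⟨lt_of_le_of_ne le_top hKpow, ENNReal.one_lt_top⟩
    · -- doubling
      intro x r hr hsub
      obtain ⟨hs1, hs2⟩ := hballs x r hr hsub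
      have hb2 := hb x (2*r) (by linarith) hs2
      have hHo := ConjAux.holder_vol hp hw₁m hpos (Ioo (x-r) (x+r))
      have hHo' : volume (Ioo (x-r) (x+r)) ≤ (μ (Ioo (x-r) (x+r)))^((1:ℝ)/p)
          * (ν (Ioo (x-r) (x+r)))^(1-1/p) := by
        rw [hμdef, hνdef, withDensity_apply _ measurableSet_Ioo,
          withDensity_apply _ measurableSet_Ioo]
        exact hHo
      have hHop := ENNReal.rpow_le_rpow hHo' hp0.le
      have hv : volume (Ioo (x-r) (x+r)) = ENNReal.ofReal (2*r) := by
        rw [Real.volume_Ioo]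
        congr 1
        ring
      have hRHSp : ((μ (Ioo (x-r) (x+r)))^((1:ℝ)/p) * (ν (Ioo (x-r) (x+r)))^(1-1/p)) ^ p
          = μ (Ioo (x-r) (x+r)) * (ν (Ioo (x-r) (x+r)))^(p-1) := by
        rw [ENNReal.mul_rpow_of_nonneg _ _ hp0.le, ← ENNReal.rpow_mul, ← ENNReal.rpow_mul]
        have e1 : (1:ℝ)/p*p = 1 := by field_simp
        have e2 : (1-1/p)*p = p-1 := by field_simp
        rw [e1, e2, ENNReal.rpow_one]
      rw [hv, hRHSp] at hHop
      have hchain : ν (Ioo (x-2*r) (x+2*r)) ^ (p-1) * μ (Ioo (x-2*r) (x+2*r))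
          ≤ (K * ν (Ioo (x-r) (x+r)) ^ (p-1)) * μ (Ioo (x-2*r) (x+2*r)) := by
        calc ν (Ioo (x-2*r) (x+2*r)) ^ (p-1) * μ (Ioo (x-2*r) (x+2*r))
            ≤ K * ENNReal.ofReal (2*r) ^ p := hb2
          _ ≤ K * (μ (Ioo (x-r) (x+r)) * ν (Ioo (x-r) (x+r)) ^ (p-1)) :=
              mul_le_mul_right hHop _
          _ ≤ K * (μ (Ioo (x-2*r) (x+2*r)) * ν (Ioo (x-r) (x+r)) ^ (p-1)) :=
              mul_le_mul_right (mul_le_mul_left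
                (measure_mono (Ioo_subset_Ioo (by linarith) (by linarith))) _) _
          _ = (K * ν (Ioo (x-r) (x+r)) ^ (p-1)) * μ (Ioo (x-2*r) (x+2*r)) := by ring
      have hμ2T : μ (Ioo (x-2*r) (x+2*r)) ≠ ⊤ := (hmes _ _ (by linarith)).2.ne
      have hμ20 : μ (Ioo (x-2*r) (x+2*r)) ≠ 0 := (hmes _ _ (by linarith)).1.ne'
      have hcan := (ENNReal.mul_le_mul_iff_left hμ20 hμ2T).mp hchain
      have h7 := ENNReal.rpow_le_rpow hcan (by positivity : (0:ℝ) ≤ 1/(p-1))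
      have he1 : (p-1) * ((1:ℝ)/(p-1)) = 1 := by field_simp
      rw [← ENNReal.rpow_mul, he1, ENNReal.rpow_one,
        ENNReal.mul_rpow_of_nonneg _ _ (by positivity : (0:ℝ) ≤ 1/(p-1)),
        ← ENNReal.rpow_mul, he1, ENNReal.rpow_one] at h7
      calc ν (Ioo (x-2*r) (x+2*r)) ≤ K^((1:ℝ)/(p-1)) * ν (Ioo (x-r) (x+r)) := h7
        _ ≤ (K^((1:ℝ)/(p-1)) + 1) * ν (Ioo (x-r) (x+r)) := mul_le_mul_left le_self_add _
    · -- Poincaré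
      have hK'T : K ^ ((1:ℝ)/p) ≠ ⊤ := ENNReal.rpow_ne_top_of_nonneg (by positivity) hKT
      refine ⟨(K ^ ((1:ℝ)/p)).toReal + 1, by positivity, 1, le_refl 1, ?_⟩
      intro x r hr hsub u g hu hg
      rw [one_mul] at hu hg ⊢
      obtain ⟨hs1, _⟩ := hballs x r hr hsub
      have hν0 : ν (Ioo (x-r) (x+r)) ≠ 0 := (hνpos _ _ (by linarith)).ne'
      have hνT : ν (Ioo (x-r) (x+r)) ≠ ⊤ := (hνfinall _ _).ne
      have hμ0 : μ (Ioo (x-r) (x+r)) ≠ 0 := (hmes _ _ (by linarith)).1.ne'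
      have hμT : μ (Ioo (x-r) (x+r)) ≠ ⊤ := (hmes _ _ (by linarith)).2.ne
      obtain ⟨hgnn, hgm, hgug⟩ := hg
      have hVfin : ∀ᵐ z ∂(volume.restrict (Ioo (x-r) (x+r))), V z < ⊤ := by
        filter_upwards [ae_restrict_of_ae hpos] with z hz
        exact lt_of_le_of_ne le_top (hVpos z hz).2
      have hconj : (p/(p-1)).HolderConjugate p := (Real.HolderConjugate.conjExponent hp).symm
      have hGae : AEMeasurable (fun t => ENNReal.ofReal (g t)) (volume.restrict (Ioo (x-r) (x+r))) :=
        (ENNReal.measurable_ofReal.comp hgm).aemeasurable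
      have hfae : AEMeasurable (fun z => ENNReal.ofReal (g z) * V z ^ ((p-1)/p))
          (volume.restrict (Ioo (x-r) (x+r))) :=
        hGae.mul ((hVae.restrict).pow aemeasurable_const)
      have hgae2 : AEMeasurable (fun z => V z ^ (-((p-1)/p)))
          (volume.restrict (Ioo (x-r) (x+r))) :=
        (hVae.restrict).pow aemeasurable_const
      have hkey := ENNReal.lintegral_mul_le_Lp_mul_Lq
        (volume.restrict (Ioo (x-r) (x+r))) hconj hfae hgae2
      have hL : (∫⁻ z, ((fun z => ENNReal.ofReal (g z) * V z ^ ((p-1)/p))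
          * fun z => V z ^ (-((p-1)/p))) z ∂(volume.restrict (Ioo (x-r) (x+r))))
          = ∫⁻ z in Ioo (x-r) (x+r), ENNReal.ofReal (g z) := by
        refine lintegral_congr_ae ?_
        filter_upwards [ae_restrict_of_ae hpos] with z hz
        simp only [Pi.mul_apply]
        rw [mul_assoc, ← ENNReal.rpow_add _ _ (hVpos z hz).1 (hVpos z hz).2,
          add_neg_cancel, ENNReal.rpow_zero, mul_one]
      have hF1 : (∫⁻ z, ((fun z => ENNReal.ofReal (g z) * V z ^ ((p-1)/p)) z) ^ (p/(p-1))
          ∂(volume.restrict (Ioo (x-r) (x+r))))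
          = ∫⁻ z in Ioo (x-r) (x+r), ENNReal.ofReal (g z) ^ (p/(p-1)) ∂ν := by
        rw [hνdef, setLIntegral_withDensity_eq_setLIntegral_mul_non_measurable₀ _
          (hVae.restrict) _ measurableSet_Ioo hVfin]
        refine lintegral_congr fun z => ?_
        simp only [Pi.mul_apply]
        rw [ENNReal.mul_rpow_of_nonneg _ _ hq0.le, ← ENNReal.rpow_mul]
        have he : (p-1)/p * (p/(p-1)) = 1 := by
          rw [div_mul_div_comm, mul_comm p (p-1), div_self (by
            exact mul_ne_zero hp1ne hpne)]
        rw [he, ENNReal.rpow_one]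
        ring
      have hF2 : (∫⁻ z, ((fun z => V z ^ (-((p-1)/p))) z) ^ p
          ∂(volume.restrict (Ioo (x-r) (x+r)))) = μ (Ioo (x-r) (x+r)) := by
        rw [hμdef, withDensity_apply _ measurableSet_Ioo]
        refine lintegral_congr fun z => ?_
        rw [← ENNReal.rpow_mul]
        simp only [hVdef]
        rw [← ENNReal.rpow_mul]
        have he : (1:ℝ)/(1-p) * (-((p-1)/p) * p) = 1 := by
          have h1 : -((p-1)/p) * p = 1 - p := by
            field_simp
            ring
          rw [h1, one_div, inv_mul_cancel₀ h1pne]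
        rw [he, ENNReal.rpow_one]
      have h1q : (1:ℝ)/(p/(p-1)) = (p-1)/p := one_div_div _ _
      rw [hL, hF1, hF2, h1q] at hkey
      -- oscillation bound
      have hosc : ∀ t ∈ Ioo (x-r) (x+r), ∀ t' ∈ Ioo (x-r) (x+r),
          ENNReal.ofReal |u t' - u t| ≤
          (∫⁻ z in Ioo (x-r) (x+r), ENNReal.ofReal (g z) ^ (p/(p-1)) ∂ν) ^ ((p-1)/p)
            * μ (Ioo (x-r) (x+r)) ^ ((1:ℝ)/p) := by
        have hosc1 : ∀ t ∈ Ioo (x-r) (x+r), ∀ t' ∈ Ioo (x-r) (x+r), t ≤ t' →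
            ENNReal.ofReal |u t' - u t| ≤
            (∫⁻ z in Ioo (x-r) (x+r), ENNReal.ofReal (g z) ^ (p/(p-1)) ∂ν) ^ ((p-1)/p)
              * μ (Ioo (x-r) (x+r)) ^ ((1:ℝ)/p) := by
          intro t ht t' ht' hle
          calc ENNReal.ofReal |u t' - u t| ≤ ∫⁻ z in Icc t t', ENNReal.ofReal (g z) :=
                hgug t t' hle (fun z hz => ⟨lt_of_lt_of_le ht.1 hz.1, lt_of_le_of_lt hz.2 ht'.2⟩)
            _ ≤ ∫⁻ z in Ioo (x-r) (x+r), ENNReal.ofReal (g z) :=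
                lintegral_mono_set (fun z hz => ⟨lt_of_lt_of_le ht.1 hz.1, lt_of_le_of_lt hz.2 ht'.2⟩)
            _ ≤ _ := hkey
        intro t ht t' ht'
        rcases le_total t t' with hle | hle
        · exact hosc1 t ht t' ht' hle
        · rw [abs_sub_comm]
          exact hosc1 t' ht' t ht hle
      have hPL := ConjAux.poinLHS_le measurableSet_Ioo hν0 hνT hu hosc
      refine le_trans hPL ?_
      -- compare M with the Poincaré RHS
      have hAqb := hAq x r hr hs1
      have hPR : PoinRHS ν (fun t => ENNReal.ofReal (g t)) (p/(p-1)) (Ioo (x-r) (x+r))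
          = ((∫⁻ z in Ioo (x-r) (x+r), ENNReal.ofReal (g z) ^ (p/(p-1)) ∂ν)
              / ν (Ioo (x-r) (x+r))) ^ ((p-1)/p) := by
        have hrfl : PoinRHS ν (fun t => ENNReal.ofReal (g t)) (p/(p-1)) (Ioo (x-r) (x+r))
            = ((∫⁻ z in Ioo (x-r) (x+r), ENNReal.ofReal (g z) ^ (p/(p-1)) ∂ν)
              / ν (Ioo (x-r) (x+r))) ^ ((1:ℝ)/(p/(p-1))) := rfl
        rw [hrfl, h1q]
      rw [hPR, ENNReal.div_rpow_of_nonneg _ _ (div_nonneg (by linarith) hp0.le),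
        div_eq_mul_inv]
      have hνP0 : (ν (Ioo (x-r) (x+r))) ^ ((p-1)/p) ≠ 0 := by
        intro h0
        rcases ENNReal.rpow_eq_zero_iff.mp h0 with ⟨h1, _⟩ | ⟨h1, _⟩
        · exact hν0 h1
        · exact hνT h1
      have hνPT : (ν (Ioo (x-r) (x+r))) ^ ((p-1)/p) ≠ ⊤ :=
        ENNReal.rpow_ne_top_of_nonneg (div_nonneg (by linarith) hp0.le) hνT
      have hKC : K ^ ((1:ℝ)/p) ≤ ENNReal.ofReal ((K ^ ((1:ℝ)/p)).toReal + 1) := by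
        refine (ENNReal.le_ofReal_iff_toReal_le hK'T (by positivity)).mpr ?_
        linarith
      have hmu : μ (Ioo (x-r) (x+r)) ^ ((1:ℝ)/p) * ν (Ioo (x-r) (x+r)) ^ ((p-1)/p)
          ≤ ENNReal.ofReal (((K ^ ((1:ℝ)/p)).toReal + 1) * r) := by
        calc μ (Ioo (x-r) (x+r)) ^ ((1:ℝ)/p) * ν (Ioo (x-r) (x+r)) ^ ((p-1)/p)
            = ν (Ioo (x-r) (x+r)) ^ ((p-1)/p) * μ (Ioo (x-r) (x+r)) ^ ((1:ℝ)/p) := mul_comm _ _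
          _ ≤ K ^ ((1:ℝ)/p) * ENNReal.ofReal r := hAqb
          _ ≤ ENNReal.ofReal ((K ^ ((1:ℝ)/p)).toReal + 1) * ENNReal.ofReal r :=
              mul_le_mul_left hKC _
          _ = ENNReal.ofReal (((K ^ ((1:ℝ)/p)).toReal + 1) * r) :=
              (ENNReal.ofReal_mul (by positivity)).symm
      set Gq : ℝ≥0∞ := ∫⁻ z in Ioo (x-r) (x+r), ENNReal.ofReal (g z) ^ (p/(p-1)) ∂ν with hGqdef
      calc Gq ^ ((p-1)/p) * μ (Ioo (x-r) (x+r)) ^ ((1:ℝ)/p)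
          = Gq ^ ((p-1)/p) * (μ (Ioo (x-r) (x+r)) ^ ((1:ℝ)/p)
            * (ν (Ioo (x-r) (x+r)) ^ ((p-1)/p) * (ν (Ioo (x-r) (x+r)) ^ ((p-1)/p))⁻¹)) := by
            rw [ENNReal.mul_inv_cancel hνP0 hνPT, mul_one]
        _ = (Gq ^ ((p-1)/p) * (ν (Ioo (x-r) (x+r)) ^ ((p-1)/p))⁻¹)
            * (μ (Ioo (x-r) (x+r)) ^ ((1:ℝ)/p) * ν (Ioo (x-r) (x+r)) ^ ((p-1)/p)) := by ring
        _ ≤ (Gq ^ ((p-1)/p) * (ν (Ioo (x-r) (x+r)) ^ ((p-1)/p))⁻¹)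
            * ENNReal.ofReal (((K ^ ((1:ℝ)/p)).toReal + 1) * r) := mul_le_mul_right hmu _
        _ = ENNReal.ofReal (((K ^ ((1:ℝ)/p)).toReal + 1) * r)
            * (Gq ^ ((p-1)/p) * (ν (Ioo (x-r) (x+r)) ^ ((p-1)/p))⁻¹) := by ring
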